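/- Let h, k ∈ ℕ, let A ⊆ ℕ be an infinite set, and let B ⊆ ℕ be a pairwise prime set with |B| = h such that uB ⊆ A for some u ∈ ℕ. Let H ⊆ ℕ be a pairwise prime set with |H| = |B| and gcd(a, b) = 1 for all a ∈ H and b ∈ B. Then at least one of the following holds: (1) there exist x, r ∈ ℕ and n ∈ H with r ≡ 1 (mod n), x ∈ A and x·n^k·r ∈ A; or (2) there exists z' ∈ ℕ such that for every t ∈ ℕ, setting z_t = z' + t·(∏_{x∈B} x²)·(∏_{x∈H} x^{2k}), the set u·[z_t, z_t + h − 1] = {u·m : z_t ≤ m ≤ z_t + h − 1} is disjoint from A. -/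

import Mathlib

/-- the dichotomy obtained from the CRT lemma. -/
theorem crt_dichotomy (h k : ℕ) (hh : 0 < h) (hk : 0 < k)
    (A : Set ℕ) (hAinf : A.Infinite)
    (B H : Finset ℕ) (u : ℕ) (hu : 0 < u)
    (hBpos : ∀ b ∈ B, 0 < b) (hBcard : B.card = h)
    (hBcop : ∀ a ∈ B, ∀ b ∈ B, a ≠ b → Nat.Coprime a b)
    (hBA : ∀ b ∈ B, u * b ∈ A)
    (hHpos : ∀ a ∈ H, 0 < a) (hHcard : H.card = B.card)
    (hHcop : ∀ a ∈ H, ∀ b ∈ H, a ≠ b → Nat.Coprime a b)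
    (hHB : ∀ a ∈ H, ∀ b ∈ B, Nat.Coprime a b) :
    (∃ x r n : ℕ, n ∈ H ∧ 0 < r ∧ r ≡ 1 [MOD n] ∧ x ∈ A ∧ x * n ^ k * r ∈ A) ∨
    (∃ z' : ℕ, ∀ t : ℕ, 0 < t →
      ∀ m ∈ Set.Icc (z' + t * ((∏ x ∈ B, x ^ 2) * ∏ x ∈ H, x ^ (2 * k)))
          (z' + t * ((∏ x ∈ B, x ^ 2) * ∏ x ∈ H, x ^ (2 * k)) + h - 1),
        u * m ∉ A) := by
  by_cases hL : (∃ x r n : ℕ, n ∈ H ∧ 0 < r ∧ r ≡ 1 [MOD n] ∧ x ∈ A ∧ x * n ^ k * r ∈ A)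
  · exact Or.inl hL
  right
  -- enumerate B and H by Fin h
  have hHcard' : H.card = h := hHcard.trans hBcard
  set eB := B.equivFinOfCardEq hBcard with heB
  set eH := H.equivFinOfCardEq hHcard' with heH
  set b : Fin h → ℕ := fun i => ((eB.symm i : B) : ℕ) with hb
  set n : Fin h → ℕ := fun i => ((eH.symm i : H) : ℕ) with hn
  have hbB : ∀ i, b i ∈ B := fun i => (eB.symm i).2
  have hnH : ∀ i, n i ∈ H := fun i => (eH.symm i).2
  have hbinj : ∀ i j : Fin h, i ≠ j → b i ≠ b j := by
    intro i j hij hbeq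
    exact hij (by simpa using congrArg eB (Subtype.ext hbeq : eB.symm i = eB.symm j))
  have hninj : ∀ i j : Fin h, i ≠ j → n i ≠ n j := by
    intro i j hij hneq
    exact hij (by simpa using congrArg eH (Subtype.ext hneq : eH.symm i = eH.symm j))
  -- moduli
  set q : Fin h → ℕ := fun i => b i * (n i) ^ (k + 1) with hq
  have hqpos : ∀ i, 0 < q i :=
    fun i => Nat.mul_pos (hBpos _ (hbB i)) (pow_pos (hHpos _ (hnH i)) _)
  have hqcop : ∀ i j : Fin h, i ≠ j → Nat.Coprime (q i) (q j) := by
    intro i j hij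
    have h1 : Nat.Coprime (b i) (b j) := hBcop _ (hbB i) _ (hbB j) (hbinj i j hij)
    have h2 : Nat.Coprime (n i) (b j) := hHB _ (hnH i) _ (hbB j)
    have h3 : Nat.Coprime (b i) (n j) := (hHB _ (hnH j) _ (hbB i)).symm
    have h4 : Nat.Coprime (n i) (n j) := hHcop _ (hnH i) _ (hnH j) (hninj i j hij)
    exact Nat.Coprime.mul (h1.mul_right (h3.pow_right _))
      (((h2.mul_right (h4.pow_right _)).pow_left _))
  -- target residues : z + i ≡ b i * n i ^ k  (mod q i)
  set c : Fin h → ℕ := fun i => b i * (n i) ^ k with hc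
  set a : Fin h → ℕ := fun i => c i + (i : ℕ) * (q i - 1) with ha
  have copList : (List.finRange h).Pairwise (Function.onFun Nat.Coprime q) :=
    (List.nodup_finRange h).pairwise_of_forall_ne (fun i _ j _ hij => hqcop i j hij)
  obtain ⟨z, hz⟩ := Nat.chineseRemainderOfList a q (List.finRange h) copList
  refine ⟨z, ?_⟩
  set M : ℕ := (∏ x ∈ B, x ^ 2) * ∏ x ∈ H, x ^ (2 * k) with hM
  have hMpos : 0 < M := by
    apply Nat.mul_pos <;>
      exact Finset.prod_pos (fun x hx => by
        first
          | exact pow_pos (hBpos x hx) _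
          | exact pow_pos (hHpos x hx) _)
  have hqM : ∀ i, q i ∣ M := by
    intro i
    apply Nat.mul_dvd_mul
    · exact dvd_trans (dvd_pow_self (b i) (by norm_num)) (Finset.dvd_prod_of_mem _ (hbB i))
    · exact dvd_trans (pow_dvd_pow (n i) (by omega)) (Finset.dvd_prod_of_mem _ (hnH i))
  intro t ht m hm
  intro humA
  -- m = z + t*M + j with j < h
  obtain ⟨hm1, hm2⟩ := hm
  set j' : ℕ := m - (z + t * M) with hj'
  have hjlt : j' < h := by omega
  set j : Fin h := ⟨j', hjlt⟩ with hjdef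
  have hmeq : m = z + t * M + j' := by omega
  -- congruence : m ≡ c j [MOD q j]
  have hzj := hz j (List.mem_finRange j)
  have hcong : m ≡ c j [MOD q j] := by
    have h1 : m ≡ a j + j' [MOD q j] := by
      rw [hmeq]
      have : t * M ≡ 0 [MOD q j] := (Nat.modEq_zero_iff_dvd).mpr ((hqM j).mul_left t)
      calc z + t * M + j' ≡ a j + 0 + j' [MOD q j] := Nat.ModEq.add_right _ ((hzj.add this))
        _ = a j + j' := by ring
    have h2 : a j + j' = c j + j' * q j := by
      have : (j : ℕ) = j' := rfl
      simp only [ha, this]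
      have hq1 : 1 ≤ q j := hqpos j
      have : j' * (q j - 1) + j' = j' * q j := by
        cases' Nat.exists_eq_add_of_le hq1 with w hw
        rw [hw, Nat.add_sub_cancel_left]; ring
      omega
    have h3 : c j + j' * q j ≡ c j [MOD q j] := by
      have hz0 : j' * q j ≡ 0 [MOD q j] := (Nat.modEq_zero_iff_dvd).mpr ⟨j', mul_comm _ _⟩
      simpa using (Nat.ModEq.refl (c j)).add hz0
    exact (h1.trans (by rw [h2])).trans h3
  -- extract m = c j * r with r ≡ 1 mod n j
  have hcm : c j ≤ m := by
    have h1 : c j ≤ q j := by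
      have : c j * n j = q j := by simp only [hc, hq]; ring
      nlinarith [hHpos _ (hnH j), hBpos _ (hbB j), hqpos j]
    have h2 : q j ≤ M := Nat.le_of_dvd hMpos (hqM j)
    have h3 : M ≤ t * M := Nat.le_mul_of_pos_left M ht
    omega
  obtain ⟨s, hs⟩ := (Nat.modEq_iff_dvd' hcm).mp hcong.symm
  have hmfac : m = c j * (1 + s * n j) := by
    have hqc : q j = c j * n j := by simp only [hc, hq]; ring
    have : m = c j + q j * s := by omega
    rw [this, hqc]; ring
  -- build the witness for the left disjunct; contradiction
  apply hL
  refine ⟨u * b j, 1 + s * n j, n j, hnH j, by positivity, ?_, hBA _ (hbB j), ?_⟩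
  · have : (1 + s * n j) % n j = 1 % n j := by
      simp [Nat.add_mul_mod_self_right]
    exact this
  · have : u * b j * n j ^ k * (1 + s * n j) = u * m := by rw [hmfac, hc]; ring
    rw [this]; exact humA
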